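/- Suppose N ≥ 2 and the positive real numbers ρ₁, …, ρ_N satisfy ∑_{j=1}^N α_j ρ_j/(β_k − α_j) = 1 for every k = 1, …, N. Define ρ̂_j = ρ_j (α_N − α_j)/(β_N − α_j) for j = 1, …, N−1. Then ∑_{j=1}^{N−1} α_j ρ̂_j/(β_k − α_j) = 1 for every k = 1, …, N−1, i.e. the numbers ρ̂₁, …, ρ̂_{N−1} solve the analogous system of size N−1 associated with α₁, β₁, …, α_{N−1}, β_{N−1}. -/

import Mathlib

/-!
STATEMENT 4: the induction step in Lemma 4.1: if positive ρ_1, …, ρ_N solve the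
N×N system ∑_j α_j ρ_j/(β_k − α_j) = 1, then
ρ̂_j = ρ_j (α_N − α_j)/(β_N − α_j) solve the analogous (N−1)×(N−1) system.
(Indices are 0-based: j = 0, …, N−1, with last index N−1.)
-/

theorem system_induction_step
    (N : ℕ) (hN : 2 ≤ N)
    (α β : ℕ → ℝ)
    (hα0 : 0 < α 0)
    (hαβ : ∀ j, j < N → α j < β j)
    (hβα : ∀ j, j + 1 < N → β j < α (j + 1))
    (ρ : ℕ → ℝ)
    (hρ : ∀ j, j < N → 0 < ρ j)
    (hsys : ∀ k, k < N → ∑ j ∈ Finset.range N, α j * ρ j / (β k - α j) = 1)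
    (ρhat : ℕ → ℝ)
    (hρhat : ∀ j, j < N - 1 →
      ρhat j = ρ j * (α (N - 1) - α j) / (β (N - 1) - α j)) :
    ∀ k, k < N - 1 →
      ∑ j ∈ Finset.range (N - 1), α j * ρhat j / (β k - α j) = 1 := by
  intro k hk
  have hk' : k < N := lt_of_lt_of_le hk (Nat.sub_le N 1)
  -- monotonicity of α on [0, N)
  have hmono : ∀ i j : ℕ, i < j → j < N → α i < α j := by
    intro i j hij hjN
    induction j with
    | zero => omega
    | succ m ih =>
      have hm : α m < α (m + 1) := lt_trans (hαβ m (by omega)) (hβα m (by omega))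
      rcases Nat.lt_succ_iff_lt_or_eq.mp hij with h | h
      · exact lt_trans (ih h (by omega)) hm
      · rw [h]; exact hm
  have hβαlt : ∀ i j : ℕ, i < j → j < N → β i < α j := by
    intro i j hij hjN
    have h1 : β i < α (i + 1) := hβα i (by omega)
    rcases eq_or_lt_of_le (Nat.succ_le_of_lt hij) with h | h
    · rw [← h]; exact h1
    · exact lt_trans h1 (hmono (i + 1) j h hjN)
  have hkey : ∀ m j : ℕ, m < N → j < N → β m - α j ≠ 0 := by
    intro m j hm hj
    rcases lt_trichotomy j m with h | h | h
    · exact ne_of_gt (sub_pos.mpr (lt_trans (hmono j m h hm) (hαβ m hm)))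
    · subst h; exact ne_of_gt (sub_pos.mpr (hαβ j hj))
    · exact ne_of_lt (sub_neg.mpr (hβαlt m j h hj))
  set n := N - 1 with hn
  have hNn : N = n + 1 := by omega
  have hnN : n < N := by omega
  have h3 : β n - β k ≠ 0 := by
    have : β k < α n := hβαlt k n (by omega) hnN
    have : β k < β n := lt_trans this (hαβ n hnN)
    exact ne_of_gt (sub_pos.mpr this)
  have h4 : β k - α n ≠ 0 := hkey k n hk' hnN
  have h5 : β n - α n ≠ 0 := hkey n n hnN hnN
  have hA : ∑ j ∈ Finset.range n, α j * ρ j / (β k - α j)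
      = 1 - α n * ρ n / (β k - α n) := by
    have h := hsys k hk'
    rw [hNn, Finset.sum_range_succ] at h
    linarith
  have hB : ∑ j ∈ Finset.range n, α j * ρ j / (β n - α j)
      = 1 - α n * ρ n / (β n - α n) := by
    have h := hsys n hnN
    rw [hNn, Finset.sum_range_succ] at h
    linarith
  have hterm : ∀ j ∈ Finset.range n, α j * ρhat j / (β k - α j)
      = α j * ρ j / (β k - α j)
        - (β n - α n) / (β n - β k)
            * (α j * ρ j / (β k - α j) - α j * ρ j / (β n - α j)) := by
    intro j hj
    rw [Finset.mem_range] at hj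
    rw [hρhat j hj]
    have h1 : β k - α j ≠ 0 := hkey k j hk' (by omega)
    have h2 : β n - α j ≠ 0 := hkey n j hnN (by omega)
    field_simp
    ring
  rw [Finset.sum_congr rfl hterm, Finset.sum_sub_distrib, ← Finset.mul_sum,
    Finset.sum_sub_distrib, hA, hB]
  field_simp
  ring
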